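/- For probability measures μ, ν on ℝ with finite first moments, μ ≼ ν in convex order if and only if the potential functions satisfy u_μ(x) ≤ u_ν(x) for all x ∈ ℝ and μ, ν have equal means, where u_μ(x) := ∫ |x − y| dμ(y). -/

import Mathlib

open MeasureTheory Set

private lemma hinge_integrable {μ : Measure ℝ} [IsProbabilityMeasure μ]
    (hμ : Integrable (fun x : ℝ => x) μ) (k : ℝ) :
    Integrable (fun y : ℝ => max (y - k) 0) μ :=
  (hμ.sub (integrable_const k)).pos_part

private lemma slope_le {φ : ℝ → ℝ} (hφ : ConvexOn ℝ univ φ) {p b c : ℝ}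
    (hb : b ≠ p) (hc : c ≠ p) (hbc : b ≤ c) :
    (φ b - φ p) / (b - p) ≤ (φ c - φ p) / (c - p) := by
  have h := hφ.slope_mono (mem_univ p) ⟨trivial, hb⟩ ⟨trivial, hc⟩ hbc
  simpa [slope_def_field] using h

private lemma hinge_le {μ ν : Measure ℝ} [IsProbabilityMeasure μ] [IsProbabilityMeasure ν]
    (hμ : Integrable (fun x : ℝ => x) μ) (hν : Integrable (fun x : ℝ => x) ν)
    (hpot : ∀ x : ℝ, ∫ y, |x - y| ∂μ ≤ ∫ y, |x - y| ∂ν)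
    (hmean : ∫ x, x ∂μ = ∫ x, x ∂ν) (k : ℝ) :
    ∫ y, max (y - k) 0 ∂μ ≤ ∫ y, max (y - k) 0 ∂ν := by
  have h1 : ∀ (ρ : Measure ℝ) [IsProbabilityMeasure ρ], Integrable (fun x : ℝ => x) ρ →
      ∫ y, max (y - k) 0 ∂ρ = ((∫ y, |k - y| ∂ρ) + ((∫ y, y ∂ρ) - k)) / 2 := by
    intro ρ _ hρ
    have he : ∀ y : ℝ, max (y - k) 0 = (|k - y| + (y - k)) / 2 := by
      intro y
      rcases le_total k y with h | h
      · rw [abs_of_nonpos (by linarith), max_eq_left (by linarith)]; ring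
      · rw [abs_of_nonneg (by linarith), max_eq_right (by linarith)]; ring
    simp_rw [he]
    have i1 : Integrable (fun a : ℝ => |k - a|) ρ := ((integrable_const k).sub hρ).abs
    have i2 : Integrable (fun a : ℝ => a - k) ρ := hρ.sub (integrable_const k)
    rw [integral_div, integral_add i1 i2, integral_sub hρ (integrable_const k), integral_const]
    simp [measure_univ]
  rw [h1 μ hμ, h1 ν hν, hmean]
  have := hpot k
  linarith

private lemma hinge_neg_le {μ ν : Measure ℝ} [IsProbabilityMeasure μ] [IsProbabilityMeasure ν]
    (hμ : Integrable (fun x : ℝ => x) μ) (hν : Integrable (fun x : ℝ => x) ν)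
    (hpot : ∀ x : ℝ, ∫ y, |x - y| ∂μ ≤ ∫ y, |x - y| ∂ν)
    (hmean : ∫ x, x ∂μ = ∫ x, x ∂ν) (k : ℝ) :
    ∫ y, max (-y - k) 0 ∂μ ≤ ∫ y, max (-y - k) 0 ∂ν := by
  have h1 : ∀ (ρ : Measure ℝ) [IsProbabilityMeasure ρ], Integrable (fun x : ℝ => x) ρ →
      ∫ y, max (-y - k) 0 ∂ρ = ((∫ y, |(-k) - y| ∂ρ) + (-(∫ y, y ∂ρ) - k)) / 2 := by
    intro ρ _ hρ
    have he : ∀ y : ℝ, max (-y - k) 0 = (|(-k) - y| + (-y - k)) / 2 := by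
      intro y
      rcases le_total (-k) y with h | h
      · rw [abs_of_nonpos (by linarith), max_eq_right (by linarith)]; ring
      · rw [abs_of_nonneg (by linarith), max_eq_left (by linarith)]; ring
    simp_rw [he]
    have i1 : Integrable (fun a : ℝ => |(-k) - a|) ρ := ((integrable_const (-k)).sub hρ).abs
    have i2 : Integrable (fun a : ℝ => -a - k) ρ := hρ.neg.sub (integrable_const k)
    rw [integral_div, integral_add i1 i2]
    have i3 : Integrable (fun a : ℝ => -a) ρ := hρ.neg
    rw [integral_sub i3 (integrable_const k), integral_neg, integral_const]
    simp [measure_univ]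
  rw [h1 μ hμ, h1 ν hν, hmean]
  have := hpot (-k)
  linarith

private lemma slope_comm' (f : ℝ → ℝ) (a b : ℝ) :
    (f a - f b) / (a - b) = (f b - f a) / (b - a) := by
  rw [← neg_sub (f b) (f a), ← neg_sub b a, neg_div_neg_eq]

private lemma phi_nonneg {φ : ℝ → ℝ} (hφ : ConvexOn ℝ univ φ) (hφ0 : ∀ x ≤ 0, φ x = 0)
    (x : ℝ) : 0 ≤ φ x := by
  rcases le_or_gt x 0 with h | h
  · exact (hφ0 x h).ge
  · have h1 := slope_le hφ (p := 0) (b := -1) (c := x) (by norm_num) (ne_of_gt h) (by linarith)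
    rw [hφ0 (-1) (by norm_num), hφ0 0 le_rfl] at h1
    norm_num at h1
    have h2 := mul_nonneg h1 h.le
    rwa [div_mul_cancel₀ _ (ne_of_gt h)] at h2

private lemma phi_mono {φ : ℝ → ℝ} (hφ : ConvexOn ℝ univ φ) (hφ0 : ∀ x ≤ 0, φ x = 0)
    {a b : ℝ} (ha : 0 ≤ a) (hab : a ≤ b) : φ a ≤ φ b := by
  rcases eq_or_lt_of_le hab with rfl | h
  · exact le_rfl
  · have h1 := slope_le hφ (p := a) (b := -1) (c := b)
      (ne_of_lt (show (-1:ℝ) < a by linarith)) (ne_of_gt h) (by linarith)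
    rw [hφ0 (-1) (by norm_num)] at h1
    have hL : 0 ≤ (0 - φ a) / (-1 - a) :=
      div_nonneg_of_nonpos (by linarith [phi_nonneg hφ hφ0 a]) (by linarith)
    have h2 := mul_nonneg (hL.trans h1) (by linarith : (0:ℝ) ≤ b - a)
    rw [div_mul_cancel₀ _ (by intro hc; rw [sub_eq_zero] at hc; exact (ne_of_gt h) hc)] at h2
    linarith

private noncomputable def hingeSlope (φ : ℝ → ℝ) (n j : ℕ) : ℝ :=
  (φ (((j:ℝ)+1)/n) - φ ((j:ℝ)/n)) / ((((j:ℝ)+1)/n) - ((j:ℝ)/n))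

private noncomputable def hingeSlopeP (φ : ℝ → ℝ) (n j : ℕ) : ℝ :=
  if j = 0 then 0 else hingeSlope φ n (j-1)

private noncomputable def happrox (φ : ℝ → ℝ) (n : ℕ) (x : ℝ) : ℝ :=
  ∑ j ∈ Finset.range (n^2), (hingeSlope φ n j - hingeSlopeP φ n j) * max (x - ((j:ℝ)+1)/n) 0

private lemma grid_lt {n : ℕ} (hn : 1 ≤ n) (a : ℝ) : a/n < (a+1)/n := by
  have hn' : (0:ℝ) < n := by exact_mod_cast hn
  have h : a < a + 1 := by linarith
  exact div_lt_div_of_pos_right h hn' |>.trans_le le_rfl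

private lemma hs_nonneg {φ : ℝ → ℝ} (hφ : ConvexOn ℝ univ φ) (hφ0 : ∀ x ≤ 0, φ x = 0)
    {n : ℕ} (hn : 1 ≤ n) (j : ℕ) : 0 ≤ hingeSlope φ n j := by
  have hn' : (0:ℝ) < n := by exact_mod_cast hn
  have h1 : (0:ℝ) ≤ (j:ℝ)/n := by positivity
  have h2 := grid_lt hn (j:ℝ)
  exact div_nonneg (sub_nonneg.mpr (phi_mono hφ hφ0 h1 h2.le)) (by linarith)

private lemma hs_mono {φ : ℝ → ℝ} (hφ : ConvexOn ℝ univ φ)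
    {n : ℕ} (hn : 1 ≤ n) (j : ℕ) : hingeSlope φ n j ≤ hingeSlope φ n (j+1) := by
  have h01 := grid_lt hn (j:ℝ)
  have h12 := grid_lt hn ((j:ℝ)+1)
  have h := slope_le hφ (p := ((j:ℝ)+1)/n) (b := (j:ℝ)/n) (c := ((j:ℝ)+1+1)/n)
    (ne_of_lt h01) (ne_of_gt h12) (by linarith)
  rw [slope_comm' φ ((j:ℝ)/n) (((j:ℝ)+1)/n)] at h
  simp only [hingeSlope]
  push_cast
  exact h

private lemma hsp_le_hs {φ : ℝ → ℝ} (hφ : ConvexOn ℝ univ φ) (hφ0 : ∀ x ≤ 0, φ x = 0)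
    {n : ℕ} (hn : 1 ≤ n) (j : ℕ) : hingeSlopeP φ n j ≤ hingeSlope φ n j := by
  cases j with
  | zero => simpa [hingeSlopeP] using hs_nonneg hφ hφ0 hn 0
  | succ m => simpa [hingeSlopeP] using hs_mono hφ hn m

private lemma hsp_nonneg {φ : ℝ → ℝ} (hφ : ConvexOn ℝ univ φ) (hφ0 : ∀ x ≤ 0, φ x = 0)
    {n : ℕ} (hn : 1 ≤ n) (j : ℕ) : 0 ≤ hingeSlopeP φ n j := by
  cases j with
  | zero => simp [hingeSlopeP]
  | succ m => simpa [hingeSlopeP] using hs_nonneg hφ hφ0 hn m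

private lemma hinge_step_upper {φ : ℝ → ℝ} (hφ : ConvexOn ℝ univ φ)
    {n : ℕ} (hn : 1 ≤ n) (m : ℕ) (x : ℝ) :
    hingeSlope φ n m * (max (x - ((m:ℝ)+1)/n) 0 - max (x - ((m:ℝ)+1+1)/n) 0)
      ≤ φ (min x (((m:ℝ)+1+1)/n)) - φ (min x (((m:ℝ)+1)/n)) := by
  have h01 := grid_lt hn (m:ℝ)
  have h12 := grid_lt hn ((m:ℝ)+1)
  set t0 := (m:ℝ)/n with ht0
  set t1 := ((m:ℝ)+1)/n with ht1
  set t2 := ((m:ℝ)+1+1)/n with ht2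
  rcases le_or_gt x t1 with h | h
  · rw [max_eq_right (by linarith), max_eq_right (by linarith),
      min_eq_left h, min_eq_left (by linarith)]
    simp
  · set b := min x t2 with hb
    have hbt1 : t1 < b := lt_min h h12
    have hbt2 : b ≤ t2 := min_le_right _ _
    have hHH' : max (x - t1) 0 - max (x - t2) 0 = b - t1 := by
      rcases le_or_gt x t2 with h' | h'
      · rw [max_eq_left (by linarith), max_eq_right (by linarith),
          show b = x from min_eq_left h']
        ring
      · rw [max_eq_left (by linarith), max_eq_left (by linarith),
          show b = t2 from min_eq_right h'.le]
        ring
    rw [hHH', min_eq_right h.le]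
    have hsl := slope_le hφ (p := t1) (b := t0) (c := b)
      (ne_of_lt h01) (ne_of_gt hbt1) (by linarith)
    rw [slope_comm' φ t0 t1] at hsl
    have hsl' : hingeSlope φ n m ≤ (φ b - φ t1) / (b - t1) := hsl
    have h2 := mul_le_mul_of_nonneg_right hsl' (by linarith : (0:ℝ) ≤ b - t1)
    rwa [div_mul_cancel₀ _ (by intro hc; rw [sub_eq_zero] at hc; exact (ne_of_gt hbt1) hc)] at h2

private lemma hinge_step_lower {φ : ℝ → ℝ} (hφ : ConvexOn ℝ univ φ)
    {n : ℕ} (hn : 1 ≤ n) (m : ℕ) (x : ℝ) :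
    φ (min (x - 1/n) (((m:ℝ)+1)/n)) - φ (min (x - 1/n) ((m:ℝ)/n))
      ≤ hingeSlope φ n m * (max (x - ((m:ℝ)+1)/n) 0 - max (x - ((m:ℝ)+1+1)/n) 0) := by
  have hn' : (0:ℝ) < n := by exact_mod_cast hn
  have h01 := grid_lt hn (m:ℝ)
  have h12 := grid_lt hn ((m:ℝ)+1)
  set t0 := (m:ℝ)/n with ht0
  set t1 := ((m:ℝ)+1)/n with ht1
  set t2 := ((m:ℝ)+1+1)/n with ht2
  have ht10 : t1 - 1/n = t0 := by rw [ht1, ht0, div_sub_div_same]; ring_nf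
  have ht21 : t2 - 1/n = t1 := by rw [ht2, ht1, div_sub_div_same]; ring_nf
  rcases le_or_gt x t1 with h | h
  · rw [max_eq_right (by linarith), max_eq_right (by linarith),
      min_eq_left (by linarith), min_eq_left (by linarith)]
    simp
  · set b := min x t2 with hb
    have hbt1 : t1 < b := lt_min h h12
    have hbt2 : b ≤ t2 := min_le_right _ _
    have hHH' : max (x - t1) 0 - max (x - t2) 0 = b - t1 := by
      rcases le_or_gt x t2 with h' | h'
      · rw [max_eq_left (by linarith), max_eq_right (by linarith),
          show b = x from min_eq_left h']
        ring
      · rw [max_eq_left (by linarith), max_eq_left (by linarith),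
          show b = t2 from min_eq_right h'.le]
        ring
    have hmin0 : min (x - 1/n) t0 = t0 := min_eq_right (by linarith)
    have hmin1 : min (x - 1/n) t1 = b - 1/n := by
      rcases le_or_gt x t2 with h' | h'
      · rw [show b = x from min_eq_left h', min_eq_left (by linarith)]
      · rw [show b = t2 from min_eq_right h'.le, ht21, min_eq_right (by linarith)]
    rw [hHH', hmin0, hmin1]
    have hsl := slope_le hφ (p := t0) (b := b - 1/n) (c := t1)
      (by intro hc; linarith) (ne_of_gt h01) (by linarith)
    have hsl' : (φ (b - 1/n) - φ t0) / ((b - 1/n) - t0) ≤ hingeSlope φ n m := hsl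
    have h2 := mul_le_mul_of_nonneg_right hsl' (by linarith : (0:ℝ) ≤ (b - 1/n) - t0)
    rw [div_mul_cancel₀ _ (by intro hc; rw [sub_eq_zero] at hc; linarith)] at h2
    have : (b - 1/n) - t0 = b - t1 := by linarith
    rw [this] at h2
    linarith

private lemma happrox_upper_aux {φ : ℝ → ℝ} (hφ : ConvexOn ℝ univ φ) (hφ0 : ∀ x ≤ 0, φ x = 0)
    {n : ℕ} (hn : 1 ≤ n) (x : ℝ) (m : ℕ) :
    ∑ j ∈ Finset.range m, (hingeSlope φ n j - hingeSlopeP φ n j) * max (x - ((j:ℝ)+1)/n) 0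
      ≤ φ (min x (((m:ℝ)+1)/n)) - φ (min x (1/n))
        + hingeSlopeP φ n m * max (x - ((m:ℝ)+1)/n) 0 := by
  induction m with
  | zero => simp [hingeSlopeP]
  | succ m ih =>
      rw [Finset.sum_range_succ, sub_mul]
      have hstep := hinge_step_upper hφ hn m x
      rw [mul_sub] at hstep
      have hspm : hingeSlopeP φ n (m+1) = hingeSlope φ n m := by simp [hingeSlopeP]
      rw [hspm]
      push_cast
      linarith

private lemma happrox_lower_aux {φ : ℝ → ℝ} (hφ : ConvexOn ℝ univ φ) (hφ0 : ∀ x ≤ 0, φ x = 0)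
    {n : ℕ} (hn : 1 ≤ n) (x : ℝ) (m : ℕ) :
    φ (min (x - 1/n) ((m:ℝ)/n)) - φ (min (x - 1/n) 0)
      + hingeSlopeP φ n m * max (x - ((m:ℝ)+1)/n) 0
      ≤ ∑ j ∈ Finset.range m, (hingeSlope φ n j - hingeSlopeP φ n j) * max (x - ((j:ℝ)+1)/n) 0 := by
  induction m with
  | zero => simp [hingeSlopeP]
  | succ m ih =>
      rw [Finset.sum_range_succ, sub_mul]
      have hstep := hinge_step_lower hφ hn m x
      rw [mul_sub] at hstep
      have hspm : hingeSlopeP φ n (m+1) = hingeSlope φ n m := by simp [hingeSlopeP]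
      rw [hspm]
      push_cast
      linarith

private lemma happrox_le {φ : ℝ → ℝ} (hφ : ConvexOn ℝ univ φ) (hφ0 : ∀ x ≤ 0, φ x = 0)
    (n : ℕ) (x : ℝ) : happrox φ n x ≤ φ x := by
  rcases Nat.eq_zero_or_pos n with rfl | hn
  · simpa [happrox] using phi_nonneg hφ hφ0 x
  · have hn' : (0:ℝ) < n := by exact_mod_cast hn
    have haux := happrox_upper_aux hφ hφ0 hn x (n^2)
    have h1 : 0 ≤ φ (min x (1/n)) := phi_nonneg hφ hφ0 _
    have h2 : φ (min x ((((n^2:ℕ):ℝ)+1)/n))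
        + hingeSlopeP φ n (n^2) * max (x - (((n^2:ℕ):ℝ)+1)/n) 0 ≤ φ x := by
      set t : ℝ := (((n^2:ℕ):ℝ)+1)/n with ht
      rcases le_or_gt x t with h | h
      · rw [min_eq_left h, max_eq_right (by linarith)]
        simp
      · rw [min_eq_right h.le, max_eq_left (by linarith)]
        obtain ⟨M, hM⟩ : ∃ M, n^2 = M + 1 := ⟨n^2 - 1, (Nat.succ_pred_eq_of_pos (pow_pos hn 2)).symm⟩
        rw [hM]
        have hspm : hingeSlopeP φ n (M+1) = hingeSlope φ n M := by simp [hingeSlopeP]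
        rw [hspm]
        have htM : t = ((M:ℝ)+1+1)/n := by rw [ht, hM]; push_cast; ring_nf
        have h12 := grid_lt hn ((M:ℝ)+1)
        have hsl := slope_le hφ (p := ((M:ℝ)+1+1)/n) (b := ((M:ℝ)+1)/n) (c := x)
          (ne_of_lt h12) (by rw [← htM]; exact h.ne') (by have h' := h; rw [htM] at h'; linarith)
        rw [slope_comm' φ (((M:ℝ)+1)/n) (((M:ℝ)+1+1)/n)] at hsl
        have hm := hs_mono hφ hn M
        have hsM1 : hingeSlope φ n (M+1) = (φ (((M:ℝ)+1+1)/n) - φ (((M:ℝ)+1)/n))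
            / ((((M:ℝ)+1+1)/n) - (((M:ℝ)+1)/n)) := by
          simp only [hingeSlope]; push_cast; ring_nf
        rw [← hsM1] at hsl
        have hchain := hm.trans hsl
        rw [← htM] at hchain
        have h3 := mul_le_mul_of_nonneg_right hchain (by linarith : (0:ℝ) ≤ x - t)
        rw [div_mul_cancel₀ _ (by intro hc; rw [sub_eq_zero] at hc; exact h.ne' hc)] at h3
        linarith
    have hud : happrox φ n x = ∑ j ∈ Finset.range (n^2),
        (hingeSlope φ n j - hingeSlopeP φ n j) * max (x - ((j:ℝ)+1)/n) 0 := rfl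
    rw [hud]
    linarith

private lemma happrox_ge {φ : ℝ → ℝ} (hφ : ConvexOn ℝ univ φ) (hφ0 : ∀ x ≤ 0, φ x = 0)
    {n : ℕ} (hn : 1 ≤ n) {x : ℝ} (hx : x ≤ (n:ℝ)) :
    φ (x - 1/n) ≤ happrox φ n x := by
  have hn' : (0:ℝ) < n := by exact_mod_cast hn
  have h1n : (0:ℝ) < 1/n := by positivity
  have haux := happrox_lower_aux hφ hφ0 hn x (n^2)
  have hNn : ((n^2 : ℕ):ℝ)/n = (n:ℝ) := by
    push_cast
    rw [sq, mul_div_assoc, div_self hn'.ne', mul_one]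
  rw [hNn, min_eq_left (by linarith), hφ0 _ (min_le_right _ _)] at haux
  have hnn : 0 ≤ hingeSlopeP φ n (n^2) * max (x - (((n^2:ℕ):ℝ)+1)/n) 0 :=
    mul_nonneg (hsp_nonneg hφ hφ0 hn _) (le_max_right _ _)
  have hud : happrox φ n x = ∑ j ∈ Finset.range (n^2),
      (hingeSlope φ n j - hingeSlopeP φ n j) * max (x - ((j:ℝ)+1)/n) 0 := rfl
  rw [hud]
  linarith

private lemma happrox_nonneg {φ : ℝ → ℝ} (hφ : ConvexOn ℝ univ φ) (hφ0 : ∀ x ≤ 0, φ x = 0)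
    (n : ℕ) (x : ℝ) : 0 ≤ happrox φ n x := by
  apply Finset.sum_nonneg
  intro j hj
  have hn : 1 ≤ n := Nat.one_le_iff_ne_zero.mpr (by rintro rfl; simp at hj)
  exact mul_nonneg (by linarith [hsp_le_hs hφ hφ0 hn j]) (le_max_right _ _)

private lemma happrox_tendsto {φ : ℝ → ℝ} (hφ : ConvexOn ℝ univ φ) (hφ0 : ∀ x ≤ 0, φ x = 0)
    (x : ℝ) :
    Filter.Tendsto (fun n => happrox φ n x) Filter.atTop (nhds (φ x)) := by
  have hcont : Continuous φ := by
    rw [← continuousOn_univ]; exact hφ.continuousOn isOpen_univ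
  have hlow : Filter.Tendsto (fun n : ℕ => φ (x - 1/n)) Filter.atTop (nhds (φ x)) := by
    have h1 : Filter.Tendsto (fun n : ℕ => x - 1/(n:ℝ)) Filter.atTop (nhds x) := by
      have h0 := tendsto_one_div_atTop_nhds_zero_nat (𝕜 := ℝ)
      simpa using Filter.Tendsto.const_sub x h0
    exact (hcont.tendsto x).comp h1
  apply tendsto_of_tendsto_of_tendsto_of_le_of_le' hlow tendsto_const_nhds
  · filter_upwards [Filter.eventually_ge_atTop (max 1 ⌈x⌉₊)] with n hnn
    have hn1 : 1 ≤ n := le_trans (le_max_left _ _) hnn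
    have hxn : x ≤ (n:ℝ) := by
      calc x ≤ (⌈x⌉₊ : ℝ) := Nat.le_ceil x
      _ ≤ (n:ℝ) := by exact_mod_cast le_trans (le_max_right _ _) hnn
    exact happrox_ge hφ hφ0 hn1 hxn
  · filter_upwards with n
    exact happrox_le hφ hφ0 n x

private lemma key {μ ν : Measure ℝ} [IsProbabilityMeasure μ] [IsProbabilityMeasure ν]
    (hμ : Integrable (fun x : ℝ => x) μ) (hν : Integrable (fun x : ℝ => x) ν)
    (hinge : ∀ k : ℝ, ∫ y, max (y - k) 0 ∂μ ≤ ∫ y, max (y - k) 0 ∂ν)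
    {φ : ℝ → ℝ} (hφ : ConvexOn ℝ univ φ) (hφ0 : ∀ x ≤ 0, φ x = 0)
    (hφμ : Integrable φ μ) (hφν : Integrable φ ν) :
    ∫ x, φ x ∂μ ≤ ∫ x, φ x ∂ν := by
  have hcontA : ∀ n, Continuous (happrox φ n) := by
    intro n
    apply continuous_finset_sum
    intro j _
    exact continuous_const.mul ((continuous_id.sub continuous_const).max continuous_const)
  have hbound : ∀ (ρ : Measure ℝ), ∀ n, ∀ᵐ x ∂ρ, ‖happrox φ n x‖ ≤ φ x := by
    intro ρ n
    filter_upwards with x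
    rw [Real.norm_eq_abs, abs_of_nonneg (happrox_nonneg hφ hφ0 n x)]
    exact happrox_le hφ hφ0 n x
  have htd : ∀ (ρ : Measure ℝ), ∀ᵐ x ∂ρ, Filter.Tendsto (fun n => happrox φ n x)
      Filter.atTop (nhds (φ x)) := by
    intro ρ
    filter_upwards with x
    exact happrox_tendsto hφ hφ0 x
  have hμlim := tendsto_integral_of_dominated_convergence (μ := μ) (F := fun n => happrox φ n)
    (f := φ) φ (fun n => (hcontA n).aestronglyMeasurable) hφμ (hbound μ) (htd μ)
  have hνlim := tendsto_integral_of_dominated_convergence (μ := ν) (F := fun n => happrox φ n)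
    (f := φ) φ (fun n => (hcontA n).aestronglyMeasurable) hφν (hbound ν) (htd ν)
  refine le_of_tendsto_of_tendsto' hμlim hνlim (fun n => ?_)
  have hintμ : ∀ j ∈ Finset.range (n^2), Integrable
      (fun x => (hingeSlope φ n j - hingeSlopeP φ n j) * max (x - ((j:ℝ)+1)/n) 0) μ :=
    fun j _ => (hinge_integrable hμ _).const_mul _
  have hintν : ∀ j ∈ Finset.range (n^2), Integrable
      (fun x => (hingeSlope φ n j - hingeSlopeP φ n j) * max (x - ((j:ℝ)+1)/n) 0) ν :=
    fun j _ => (hinge_integrable hν _).const_mul _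
  have hudμ : ∫ x, happrox φ n x ∂μ = ∑ j ∈ Finset.range (n^2),
      ∫ x, (hingeSlope φ n j - hingeSlopeP φ n j) * max (x - ((j:ℝ)+1)/n) 0 ∂μ :=
    integral_finset_sum _ hintμ
  have hudν : ∫ x, happrox φ n x ∂ν = ∑ j ∈ Finset.range (n^2),
      ∫ x, (hingeSlope φ n j - hingeSlopeP φ n j) * max (x - ((j:ℝ)+1)/n) 0 ∂ν :=
    integral_finset_sum _ hintν
  rw [hudμ, hudν]
  apply Finset.sum_le_sum
  intro j hj
  have hn : 1 ≤ n := Nat.one_le_iff_ne_zero.mpr (by rintro rfl; simp at hj)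
  rw [MeasureTheory.integral_const_mul, MeasureTheory.integral_const_mul]
  exact mul_le_mul_of_nonneg_left (hinge _) (by linarith [hsp_le_hs hφ hφ0 hn j])

private lemma eta_mono {η : ℝ → ℝ} (hη : ConvexOn ℝ univ η) (hη0 : η 0 = 0)
    (hnn : ∀ x, 0 ≤ η x) {a b : ℝ} (ha : 0 ≤ a) (hab : a ≤ b) : η a ≤ η b := by
  rcases eq_or_lt_of_le hab with rfl | h
  · exact le_rfl
  · rcases eq_or_lt_of_le ha with rfl | ha'
    · rw [hη0]; exact hnn b
    · have h1 := slope_le hη (p := a) (b := 0) (c := b) ha'.ne h.ne' (by linarith)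
      have hL : 0 ≤ (η 0 - η a) / (0 - a) :=
        div_nonneg_of_nonpos (by rw [hη0]; linarith [hnn a]) (by linarith)
      have h2 := mul_nonneg (hL.trans h1) (by linarith : (0:ℝ) ≤ b - a)
      rw [div_mul_cancel₀ _ (by intro hc; rw [sub_eq_zero] at hc; exact h.ne' hc)] at h2
      linarith

private lemma eta_anti {η : ℝ → ℝ} (hη : ConvexOn ℝ univ η) (hη0 : η 0 = 0)
    (hnn : ∀ x, 0 ≤ η x) {a b : ℝ} (hb : b ≤ 0) (hab : a ≤ b) : η b ≤ η a := by
  rcases eq_or_lt_of_le hab with rfl | h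
  · exact le_rfl
  · rcases eq_or_lt_of_le hb with rfl | hb'
    · rw [hη0]; exact hnn a
    · have h1 := slope_le hη (p := b) (b := a) (c := 0) h.ne hb'.ne' (by linarith)
      have hR : (η 0 - η b) / (0 - b) ≤ 0 :=
        div_nonpos_of_nonpos_of_nonneg (by rw [hη0]; linarith [hnn b]) (by linarith)
      have h2 := mul_nonneg_of_nonpos_of_nonpos (h1.trans hR) (by linarith : a - b ≤ 0)
      rw [div_mul_cancel₀ _ (by intro hc; rw [sub_eq_zero] at hc; exact h.ne hc)] at h2
      linarith

private lemma etap_convex {η : ℝ → ℝ} (hη : ConvexOn ℝ univ η) (hη0 : η 0 = 0)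
    (hnn : ∀ x, 0 ≤ η x) : ConvexOn ℝ univ (fun x => η (max x 0)) := by
  refine ⟨convex_univ, fun p _ q _ a b ha hb hab => ?_⟩
  simp only [smul_eq_mul]
  have h1 : max (a*p + b*q) 0 ≤ a * max p 0 + b * max q 0 := by
    apply max_le
    · exact add_le_add (mul_le_mul_of_nonneg_left (le_max_left _ _) ha)
        (mul_le_mul_of_nonneg_left (le_max_left _ _) hb)
    · positivity
  calc η (max (a*p + b*q) 0) ≤ η (a * max p 0 + b * max q 0) :=
        eta_mono hη hη0 hnn (le_max_right _ _) h1
  _ ≤ a * η (max p 0) + b * η (max q 0) := by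
        have h2 := hη.2 (mem_univ (max p 0)) (mem_univ (max q 0)) ha hb hab
        simpa [smul_eq_mul] using h2

private lemma etam_convex {η : ℝ → ℝ} (hη : ConvexOn ℝ univ η) (hη0 : η 0 = 0)
    (hnn : ∀ x, 0 ≤ η x) : ConvexOn ℝ univ (fun x => η (min (-x) 0)) := by
  refine ⟨convex_univ, fun p _ q _ a b ha hb hab => ?_⟩
  simp only [smul_eq_mul]
  have h1 : a * min (-p) 0 + b * min (-q) 0 ≤ min (-(a*p + b*q)) 0 := by
    apply le_min
    · have e1 : a * min (-p) 0 ≤ a * (-p) := mul_le_mul_of_nonneg_left (min_le_left _ _) ha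
      have e2 : b * min (-q) 0 ≤ b * (-q) := mul_le_mul_of_nonneg_left (min_le_left _ _) hb
      have : a * (-p) + b * (-q) = -(a*p + b*q) := by ring
      linarith
    · have e1 : a * min (-p) 0 ≤ 0 :=
        mul_nonpos_of_nonneg_of_nonpos ha (min_le_right _ _)
      have e2 : b * min (-q) 0 ≤ 0 :=
        mul_nonpos_of_nonneg_of_nonpos hb (min_le_right _ _)
      linarith
  calc η (min (-(a*p + b*q)) 0) ≤ η (a * min (-p) 0 + b * min (-q) 0) :=
        eta_anti hη hη0 hnn (min_le_right _ _) h1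
  _ ≤ a * η (min (-p) 0) + b * η (min (-q) 0) := by
        have h2 := hη.2 (mem_univ (min (-p) 0)) (mem_univ (min (-q) 0)) ha hb hab
        simpa [smul_eq_mul] using h2

/-- `μ ≼ ν` in convex order iff the potential functions satisfy `u_μ ≤ u_ν` everywhere
and the means agree, where `u_μ(x) = ∫ |x - y| dμ(y)`. -/
theorem convexOrder_iff_potentials
    (μ ν : Measure ℝ) [IsProbabilityMeasure μ] [IsProbabilityMeasure ν]
    (hμ : Integrable (fun x : ℝ => x) μ) (hν : Integrable (fun x : ℝ => x) ν) :
    (∀ ξ : ℝ → ℝ, ConvexOn ℝ univ ξ → Integrable ξ μ → Integrable ξ ν →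
        ∫ x, ξ x ∂μ ≤ ∫ x, ξ x ∂ν)
      ↔ ((∀ x : ℝ, ∫ y, |x - y| ∂μ ≤ ∫ y, |x - y| ∂ν) ∧
          ∫ x, x ∂μ = ∫ x, x ∂ν) := by
  constructor
  · intro H
    constructor
    · intro x
      have hcvx : ConvexOn ℝ univ (fun y : ℝ => |x - y|) := by
        refine ⟨convex_univ, fun p _ q _ a b ha hb hab => ?_⟩
        simp only [smul_eq_mul]
        have h1 : x - (a*p + b*q) = a*(x - p) + b*(x - q) := by linear_combination x * hab.symm
        calc |x - (a*p + b*q)| = |a*(x-p) + b*(x-q)| := by rw [h1]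
        _ ≤ |a*(x-p)| + |b*(x-q)| := abs_add_le _ _
        _ = a*|x-p| + b*|x-q| := by
            rw [abs_mul, abs_mul, abs_of_nonneg ha, abs_of_nonneg hb]
      exact H _ hcvx ((integrable_const x).sub hμ).abs ((integrable_const x).sub hν).abs
    · have h1 := H (fun x => x) (convexOn_id convex_univ) hμ hν
      have hneg : ConvexOn ℝ univ (fun x : ℝ => -x) := by
        refine ⟨convex_univ, fun p _ q _ a b ha hb hab => ?_⟩
        simp only [smul_eq_mul]
        apply le_of_eq; ring
      have h2 := H _ hneg hμ.neg hν.neg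
      rw [integral_neg, integral_neg] at h2
      linarith
  · rintro ⟨hpot, hmean⟩
    intro ξ hcx hξμ hξν
    set S := (fun z : ℝ => (ξ 0 - ξ z) / (0 - z)) '' Iio (0:ℝ) with hS
    have hSne : S.Nonempty := ⟨_, ⟨-1, by norm_num, rfl⟩⟩
    have hub : ∀ s ∈ S, s ≤ (ξ 1 - ξ 0) / (1 - 0) := by
      rintro s ⟨z, hz, rfl⟩
      have hz' : z < 0 := hz
      dsimp only
      rw [slope_comm' ξ 0 z]
      exact slope_le hcx (p := 0) (b := z) (c := 1) (ne_of_lt hz') (by norm_num) (by linarith)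
    have hbdd : BddAbove S := ⟨_, hub⟩
    set c := sSup S with hc
    have hc1 : ∀ z : ℝ, z < 0 → (ξ 0 - ξ z) / (0 - z) ≤ c :=
      fun z hz => le_csSup hbdd ⟨z, hz, rfl⟩
    have hc2 : ∀ y : ℝ, 0 < y → c ≤ (ξ y - ξ 0) / (y - 0) := by
      intro y hy
      apply csSup_le hSne
      rintro s ⟨z, hz, rfl⟩
      have hz' : z < 0 := hz
      dsimp only
      rw [slope_comm' ξ 0 z]
      exact slope_le hcx (p := 0) (b := z) (c := y) (ne_of_lt hz') (ne_of_gt hy) (by linarith)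
    have htang : ∀ x : ℝ, ξ 0 + c * x ≤ ξ x := by
      intro x
      rcases lt_trichotomy x 0 with h | rfl | h
      · have h1 := hc1 x h
        rw [div_le_iff₀ (by linarith)] at h1
        linarith
      · simp
      · have h1 := hc2 x h
        rw [le_div_iff₀ (by linarith)] at h1
        linarith
    set η := fun x => ξ x - (ξ 0 + c * x) with hηdef
    have haff : ConcaveOn ℝ univ (fun x : ℝ => ξ 0 + c * x) := by
      refine ⟨convex_univ, fun p _ q _ a b ha hb hab => ?_⟩
      simp only [smul_eq_mul]
      apply le_of_eq
      linear_combination (ξ 0) * hab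
    have hη : ConvexOn ℝ univ η := hcx.sub haff
    have hη0 : η 0 = 0 := by simp [hηdef]
    have hηnn : ∀ x, 0 ≤ η x := fun x => sub_nonneg.mpr (htang x)
    have hηcont : Continuous η := by
      rw [← continuousOn_univ]; exact hη.continuousOn isOpen_univ
    have haffintμ : Integrable (fun x : ℝ => ξ 0 + c * x) μ :=
      (integrable_const (ξ 0)).add (hμ.const_mul c)
    have haffintν : Integrable (fun x : ℝ => ξ 0 + c * x) ν :=
      (integrable_const (ξ 0)).add (hν.const_mul c)
    have hηintμ : Integrable η μ := hξμ.sub haffintμ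
    have hηintν : Integrable η ν := hξν.sub haffintν
    suffices hred : ∫ x, η x ∂μ ≤ ∫ x, η x ∂ν by
      have e1 : ∫ x, η x ∂μ = ∫ x, ξ x ∂μ - (ξ 0 + c * ∫ x, x ∂μ) := by
        rw [show (∫ x, η x ∂μ) = ∫ x, (ξ x - (ξ 0 + c * x)) ∂μ from rfl,
          integral_sub hξμ haffintμ, integral_add (integrable_const _) (hμ.const_mul c),
          integral_const, MeasureTheory.integral_const_mul]
        simp [measure_univ]
      have e2 : ∫ x, η x ∂ν = ∫ x, ξ x ∂ν - (ξ 0 + c * ∫ x, x ∂ν) := by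
        rw [show (∫ x, η x ∂ν) = ∫ x, (ξ x - (ξ 0 + c * x)) ∂ν from rfl,
          integral_sub hξν haffintν, integral_add (integrable_const _) (hν.const_mul c),
          integral_const, MeasureTheory.integral_const_mul]
        simp [measure_univ]
      rw [e1, e2, hmean] at hred
      linarith
    have hple : ∀ x, η (max x 0) ≤ η x := by
      intro x
      rcases le_or_gt x 0 with h | h
      · rw [max_eq_right h, hη0]; exact hηnn x
      · rw [max_eq_left h.le]
    have hmle : ∀ x, η (min x 0) ≤ η x := by
      intro x
      rcases le_or_gt x 0 with h | h
      · rw [min_eq_left h]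
      · rw [min_eq_right h.le, hη0]; exact hηnn x
    have hsplit : ∀ x, η x = η (max x 0) + η (min x 0) := by
      intro x
      rcases le_or_gt x 0 with h | h
      · rw [max_eq_right h, min_eq_left h, hη0]; ring
      · rw [max_eq_left h.le, min_eq_right h.le, hη0]; ring
    have hpintμ : Integrable (fun x => η (max x 0)) μ :=
      hηintμ.mono' ((hηcont.comp (continuous_id.max continuous_const)).aestronglyMeasurable)
        (Filter.Eventually.of_forall fun x => by
          rw [Real.norm_eq_abs, abs_of_nonneg (hηnn _)]; exact hple x)
    have hpintν : Integrable (fun x => η (max x 0)) ν :=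
      hηintν.mono' ((hηcont.comp (continuous_id.max continuous_const)).aestronglyMeasurable)
        (Filter.Eventually.of_forall fun x => by
          rw [Real.norm_eq_abs, abs_of_nonneg (hηnn _)]; exact hple x)
    have hmintμ : Integrable (fun x => η (min x 0)) μ :=
      hηintμ.mono' ((hηcont.comp (continuous_id.min continuous_const)).aestronglyMeasurable)
        (Filter.Eventually.of_forall fun x => by
          rw [Real.norm_eq_abs, abs_of_nonneg (hηnn _)]; exact hmle x)
    have hmintν : Integrable (fun x => η (min x 0)) ν :=
      hηintν.mono' ((hηcont.comp (continuous_id.min continuous_const)).aestronglyMeasurable)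
        (Filter.Eventually.of_forall fun x => by
          rw [Real.norm_eq_abs, abs_of_nonneg (hηnn _)]; exact hmle x)
    have hpart1 : ∫ x, η (max x 0) ∂μ ≤ ∫ x, η (max x 0) ∂ν :=
      key hμ hν (hinge_le hμ hν hpot hmean) (etap_convex hη hη0 hηnn)
        (fun x hx => by rw [max_eq_right hx, hη0]) hpintμ hpintν
    have hpart2 : ∫ x, η (min x 0) ∂μ ≤ ∫ x, η (min x 0) ∂ν := by
      set e : ℝ ≃ᵐ ℝ := MeasurableEquiv.neg ℝ with he
      have hee : ∀ x : ℝ, e x = -x := fun x => rfl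
      haveI h1 : IsProbabilityMeasure (μ.map e) :=
        Measure.isProbabilityMeasure_map e.measurable.aemeasurable
      haveI h2 : IsProbabilityMeasure (ν.map e) :=
        Measure.isProbabilityMeasure_map e.measurable.aemeasurable
      have hidμ' : Integrable (fun x : ℝ => x) (μ.map e) := by
        rw [integrable_map_equiv]
        have : ((fun x : ℝ => x) ∘ e) = fun x : ℝ => -x := by funext x; simp [hee]
        rw [this]; exact hμ.neg
      have hidν' : Integrable (fun x : ℝ => x) (ν.map e) := by
        rw [integrable_map_equiv]
        have : ((fun x : ℝ => x) ∘ e) = fun x : ℝ => -x := by funext x; simp [hee]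
        rw [this]; exact hν.neg
      have hinge' : ∀ k : ℝ, ∫ y, max (y - k) 0 ∂(μ.map e) ≤ ∫ y, max (y - k) 0 ∂(ν.map e) := by
        intro k
        rw [integral_map_equiv, integral_map_equiv]
        simp only [hee]
        exact hinge_neg_le hμ hν hpot hmean k
      set φ' : ℝ → ℝ := fun x => η (min (-x) 0) with hφ'
      have hφ'0 : ∀ x ≤ 0, φ' x = 0 := by
        intro x hx
        rw [hφ']
        dsimp only
        rw [min_eq_right (by linarith), hη0]
      have hmintμ' : Integrable φ' (μ.map e) := by
        rw [integrable_map_equiv]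
        have : (φ' ∘ e) = fun x => η (min x 0) := by
          funext x; simp [hφ', hee, Function.comp]
        rw [this]; exact hmintμ
      have hmintν' : Integrable φ' (ν.map e) := by
        rw [integrable_map_equiv]
        have : (φ' ∘ e) = fun x => η (min x 0) := by
          funext x; simp [hφ', hee, Function.comp]
        rw [this]; exact hmintν
      have hres := key hidμ' hidν' hinge' (etam_convex hη hη0 hηnn) hφ'0 hmintμ' hmintν'
      rw [integral_map_equiv, integral_map_equiv] at hres
      have hconv : ∀ x : ℝ, -e x = x := fun x => by rw [hee, neg_neg]
      simpa only [hconv] using hres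
    calc ∫ x, η x ∂μ = ∫ x, (η (max x 0) + η (min x 0)) ∂μ := by
          apply integral_congr_ae
          filter_upwards with x
          exact hsplit x
    _ = (∫ x, η (max x 0) ∂μ) + ∫ x, η (min x 0) ∂μ := integral_add hpintμ hmintμ
    _ ≤ (∫ x, η (max x 0) ∂ν) + ∫ x, η (min x 0) ∂ν := add_le_add hpart1 hpart2
    _ = ∫ x, (η (max x 0) + η (min x 0)) ∂ν := (integral_add hpintν hmintν).symm
    _ = ∫ x, η x ∂ν := by
          apply integral_congr_ae
          filter_upwards with x
          exact (hsplit x).symm
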